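/- Let n, d, N be positive integers with d | N and N/d ≥ n+1, and suppose m_{(i)} = dⁿ for all n-tuples (i) with σ(i) ≤ N/d − n (and m_{(i)} ≥ 0 otherwise). Then for each fixed j ∈ {1,…,n}, Σ_{σ(i) ≤ N/d} m_{(i)}·i_j ≥ N(N−d)⋯(N−(n−1)d)(N−nd)/((n+1)!·d). -/

import Mathlib

open Finset

/-- Tuples with sum at most `T`. -/
def Sset (n T : ℕ) : Finset (Fin n → ℕ) :=
  (Fintype.piFinset fun _ : Fin n => Finset.range (T + 1)).filter fun i => ∑ s, i s ≤ T

lemma mem_Sset {n T : ℕ} {i : Fin n → ℕ} : i ∈ Sset n T ↔ ∑ s, i s ≤ T := by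
  simp only [Sset, Finset.mem_filter, Fintype.mem_piFinset, Finset.mem_range]
  constructor
  · exact fun h => h.2
  · intro h
    refine ⟨fun s => Nat.lt_succ_of_le ?_, h⟩
    exact le_trans (Finset.single_le_sum (fun _ _ => Nat.zero_le _) (Finset.mem_univ s)) h

lemma sum_Sset_succ {M : Type*} [AddCommMonoid M] (n T : ℕ) (f : (Fin (n + 1) → ℕ) → M) :
    ∑ i ∈ Sset (n + 1) T, f i
      = ∑ a ∈ Finset.range (T + 1), ∑ t ∈ Sset n (T - a), f (Fin.cons a t) := by
  rw [← Finset.sum_sigma (Finset.range (T + 1)) (fun a => Sset n (T - a))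
      (fun x => f (Fin.cons x.1 x.2))]
  refine Finset.sum_nbij' (fun i => ⟨i 0, Fin.tail i⟩)
    (fun x => Fin.cons x.1 x.2) ?_ ?_ ?_ ?_ ?_
  · intro i hi
    rw [mem_Sset] at hi
    rw [Fin.sum_univ_succ] at hi
    simp only [Finset.mem_sigma, Finset.mem_range, mem_Sset]
    constructor
    · omega
    · show (∑ s, Fin.tail i s) ≤ T - i 0
      have : ∑ s, Fin.tail i s = ∑ s : Fin n, i s.succ := rfl
      omega
  · intro x hx
    simp only [Finset.mem_sigma, Finset.mem_range, mem_Sset] at hx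
    rw [mem_Sset, Fin.sum_univ_succ]
    simp only [Fin.cons_zero, Fin.cons_succ]
    have := hx.2
    omega
  · intro i _; exact Fin.cons_self_tail i
  · intro x _
    ext : 1
    · simp
    · simp [Fin.tail_cons]
  · intro i _
    rw [Fin.cons_self_tail]

/-- Hockey stick. -/
lemma hs1 (k : ℕ) : ∀ T : ℕ,
    ∑ t ∈ Finset.range (T + 1), (t + k).choose k = (T + k + 1).choose (k + 1) := by
  intro T
  induction T with
  | zero => simp
  | succ T ih =>
    rw [Finset.sum_range_succ, ih]
    have : T + 1 + k + 1 = (T + k + 1) + 1 := by ring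
    rw [this, Nat.choose_succ_succ (T + k + 1) k]
    have : T + 1 + k = T + k + 1 := by ring
    rw [this]
    ring

/-- Hockey stick, shifted variant. -/
lemma hs2 (k : ℕ) : ∀ T : ℕ,
    ∑ t ∈ Finset.range (T + 1), (t + k).choose (k + 1) = (T + k + 1).choose (k + 2) := by
  intro T
  induction T with
  | zero => simp
  | succ T ih =>
    rw [Finset.sum_range_succ, ih]
    have h1 : T + 1 + k + 1 = (T + k + 1) + 1 := by ring
    rw [h1, Nat.choose_succ_succ (T + k + 1) (k + 1)]
    have : T + 1 + k = T + k + 1 := by ring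
    rw [this]
    ring

lemma gsum (k : ℕ) : ∀ T : ℕ,
    ∑ b ∈ Finset.range (T + 1), (T - b) * (b + k).choose k = (T + k + 1).choose (k + 2) := by
  intro T
  induction T with
  | zero => simp
  | succ T ih =>
    rw [Finset.sum_range_succ]
    have hz : (T + 1 - (T + 1)) * ((T + 1) + k).choose k = 0 := by simp
    rw [hz, add_zero]
    have hsplit : ∑ b ∈ Finset.range (T + 1), (T + 1 - b) * (b + k).choose k
        = (∑ b ∈ Finset.range (T + 1), (T - b) * (b + k).choose k)
          + ∑ b ∈ Finset.range (T + 1), (b + k).choose k := by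
      rw [← Finset.sum_add_distrib]
      refine Finset.sum_congr rfl fun b hb => ?_
      rw [Finset.mem_range] at hb
      have : T + 1 - b = (T - b) + 1 := by omega
      rw [this, add_mul, one_mul]
    rw [hsplit, ih, hs1 k T]
    have h1 : T + 1 + k + 1 = (T + k + 1) + 1 := by ring
    rw [h1, Nat.choose_succ_succ (T + k + 1) (k + 1)]
    ring

lemma l2 (k : ℕ) (T : ℕ) :
    ∑ a ∈ Finset.range (T + 1), a * ((T - a) + k).choose k = (T + k + 1).choose (k + 2) := by
  rw [← gsum k T]
  rw [← Finset.sum_range_reflect (fun b => (T - b) * (b + k).choose k) (T + 1)]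
  refine Finset.sum_congr rfl fun a ha => ?_
  rw [Finset.mem_range] at ha
  have h1 : T + 1 - 1 - a = T - a := by omega
  have h2 : T - (T - a) = a := by omega
  rw [h1, h2]
  try rfl

lemma reflect_sum (f : ℕ → ℕ) (T : ℕ) :
    ∑ a ∈ Finset.range (T + 1), f (T - a) = ∑ a ∈ Finset.range (T + 1), f a := by
  rw [← Finset.sum_range_reflect f (T + 1)]
  refine Finset.sum_congr rfl fun a ha => ?_
  rw [Finset.mem_range] at ha
  congr 1
  try omega

lemma card_Sset : ∀ n T : ℕ, (Sset n T).card = (T + n).choose n := by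
  intro n
  induction n with
  | zero =>
    intro T
    rw [Nat.choose_zero_right]
    rw [show (Sset 0 T) = {(fun s => 0 : Fin 0 → ℕ)} from ?_]
    · simp
    · ext i
      rw [mem_Sset]
      simp [Subsingleton.elim i (fun s => 0)]
  | succ n ih =>
    intro T
    rw [Finset.card_eq_sum_ones, sum_Sset_succ n T (fun _ => 1)]
    have : ∀ a ∈ Finset.range (T + 1),
        (∑ _t ∈ Sset n (T - a), 1) = ((T - a) + n).choose n := by
      intro a _
      rw [← Finset.card_eq_sum_ones, ih]
    rw [Finset.sum_congr rfl this, reflect_sum (fun t => (t + n).choose n) T, hs1 n T]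
    rfl

lemma sum_coord_Sset : ∀ (n T : ℕ) (j : Fin n),
    (∑ i ∈ Sset n T, i j) = (T + n).choose (n + 1) := by
  intro n
  induction n with
  | zero => intro T j; exact absurd j.2 (by omega)
  | succ n ih =>
    intro T j
    rw [sum_Sset_succ n T (fun i => i j)]
    induction j using Fin.cases with
    | zero =>
      simp only [Fin.cons_zero]
      have : ∀ a ∈ Finset.range (T + 1),
          (∑ _t ∈ Sset n (T - a), a) = a * ((T - a) + n).choose n := by
        intro a _
        rw [Finset.sum_const, card_Sset, smul_eq_mul, mul_comm]
      rw [Finset.sum_congr rfl this, l2 n T]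
      rfl
    | succ j' =>
      simp only [Fin.cons_succ]
      have : ∀ a ∈ Finset.range (T + 1),
          (∑ t ∈ Sset n (T - a), t j') = ((T - a) + n).choose (n + 1) := by
        intro a _; exact ih (T - a) j'
      rw [Finset.sum_congr rfl this, reflect_sum (fun t => (t + n).choose (n + 1)) T, hs2 n T]
      rfl

/-- Let `d ∣ N` with `N/d ≥ n+1`, and suppose `m_{(i)} = dⁿ` whenever
`σ(i) ≤ N/d − n` and `m_{(i)} ≥ 0` always.  Then for each fixed coordinate `j`,
`Σ_{σ(i) ≤ N/d} m_{(i)} i_j ≥ N(N−d)⋯(N−nd)/((n+1)!·d)`. -/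
theorem stmt_19 (n d N : ℕ) (hn : 1 ≤ n) (hd : 1 ≤ d) (hdvd : d ∣ N)
    (hNd : n + 1 ≤ N / d)
    (m : (Fin n → ℕ) → ℝ)
    (hm : ∀ i : Fin n → ℕ, (∑ s, i s) ≤ N / d - n → m i = (d : ℝ) ^ n)
    (hm0 : ∀ i, 0 ≤ m i) (j : Fin n) :
    (∏ l ∈ Finset.range (n + 1), ((N : ℝ) - l * d)) /
        ((Nat.factorial (n + 1)) * d) ≤
      ∑ i ∈ Finset.filter (fun i : Fin n → ℕ => ∑ s, i s ≤ N / d)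
          (Fintype.piFinset fun _ : Fin n => Finset.range (N / d + 1)),
        m i * (i j : ℝ) := by
  set q := N / d with hq
  set T := q - n with hT
  have hNdq : N = d * q := by rw [hq, Nat.mul_div_cancel' hdvd]
  have hTq : T + n = q := by omega
  -- the restricted set
  have hsubset : Sset n T ⊆ Finset.filter (fun i : Fin n → ℕ => ∑ s, i s ≤ q)
      (Fintype.piFinset fun _ : Fin n => Finset.range (q + 1)) := by
    intro i hi
    rw [mem_Sset] at hi
    have hle : ∑ s, i s ≤ q := le_trans hi (by omega)
    rw [Finset.mem_filter]
    refine ⟨?_, hle⟩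
    rw [Fintype.mem_piFinset]
    intro s
    rw [Finset.mem_range]
    have := Finset.single_le_sum (f := i) (fun _ _ => Nat.zero_le _) (Finset.mem_univ s)
    omega
  have hstep1 : ∑ i ∈ Sset n T, m i * (i j : ℝ)
      ≤ ∑ i ∈ Finset.filter (fun i : Fin n → ℕ => ∑ s, i s ≤ q)
          (Fintype.piFinset fun _ : Fin n => Finset.range (q + 1)), m i * (i j : ℝ) :=
    Finset.sum_le_sum_of_subset_of_nonneg hsubset
      (fun i _ _ => mul_nonneg (hm0 i) (Nat.cast_nonneg _))
  have hval : ∑ i ∈ Sset n T, m i * (i j : ℝ)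
      = (d : ℝ) ^ n * (q.choose (n + 1) : ℝ) := by
    have h1 : ∀ i ∈ Sset n T, m i * (i j : ℝ) = (d : ℝ) ^ n * (i j : ℝ) := by
      intro i hi
      rw [mem_Sset] at hi
      rw [hm i (by omega)]
    rw [Finset.sum_congr rfl h1, ← Finset.mul_sum]
    congr 1
    rw [← Nat.cast_sum]
    rw [show (∑ i ∈ Sset n T, i j) = (T + n).choose (n + 1) from sum_coord_Sset n T j, hTq]
  -- compute the left side
  have hLHS : (∏ l ∈ Finset.range (n + 1), ((N : ℝ) - l * d)) /
      ((Nat.factorial (n + 1)) * d)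
      = (d : ℝ) ^ n * (q.choose (n + 1) : ℝ) := by
    have hprod : ∏ l ∈ Finset.range (n + 1), ((N : ℝ) - l * d)
        = (d : ℝ) ^ (n + 1) * (q.descFactorial (n + 1) : ℝ) := by
      have hdp : (d : ℝ) ^ (n + 1) = ∏ _l ∈ Finset.range (n + 1), (d : ℝ) := by
        rw [Finset.prod_const, Finset.card_range]
      rw [Nat.descFactorial_eq_prod_range, Nat.cast_prod, hdp, ← Finset.prod_mul_distrib]
      refine Finset.prod_congr rfl fun l hl => ?_
      rw [Finset.mem_range] at hl
      have hlq : l ≤ q := by omega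
      rw [hNdq]
      push_cast [Nat.cast_sub hlq]
      ring
    rw [hprod, Nat.descFactorial_eq_factorial_mul_choose]
    have hfac : ((Nat.factorial (n + 1)) : ℝ) ≠ 0 := by
      exact_mod_cast Nat.factorial_ne_zero (n + 1)
    have hdne : (d : ℝ) ≠ 0 := by
      have : (0 : ℝ) < d := by exact_mod_cast hd
      exact ne_of_gt this
    push_cast
    field_simp
    ring
  rw [hLHS]
  calc (d : ℝ) ^ n * (q.choose (n + 1) : ℝ) = ∑ i ∈ Sset n T, m i * (i j : ℝ) := hval.symm
    _ ≤ _ := hstep1
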